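/- Let (W, S) be a Coxeter system and w ∈ W. The set L(w) of simple reflections s with s ≤_Pre w (i.e., ℓ(sw) < ℓ(w)) satisfies: if T ⊆ L(w), then the subgroup W_T generated by T is finite and its longest element Δ_T satisfies Δ_T ≤_Pre w. -/

import Mathlib

/-!
STATEMENT 5.  Let `(W, S)` be a Coxeter system and `w ∈ W`.  Let
`L(w) = { i | ℓ(sᵢ w) < ℓ(w) }` be the set of simple left-prefixes of `w`.
If `T ⊆ L(w)`, then the standard parabolic subgroup `W_T` generated by the
simple reflections indexed by `T` is finite, and it has a longest element
`Δ_T` which satisfies `Δ_T ≤_Pre w` in the prefix (left weak) order.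
-/

/-- The prefix (left weak) order on a Coxeter group:
`u ≤_Pre v` iff `ℓ(u) + ℓ(u⁻¹ v) = ℓ(v)`. -/
def CoxeterSystem.lePre {B : Type*} {W : Type*} [Group W] {M : CoxeterMatrix B}
    (cs : CoxeterSystem M W) (u v : W) : Prop :=
  cs.length u + cs.length (u⁻¹ * v) = cs.length v

open List

namespace CoxStmt5

variable {B : Type*} {W : Type*} [Group W] {M : CoxeterMatrix B}

local notation "ℓ" => CoxeterSystem.length

/-- sign helper -/
noncomputable def tsgn (t r : W) : ℤˣ := @ite _ (r = t) (Classical.propDecidable _) (-1) 1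

lemma tsgn_pos {t r : W} (h : r ≠ t) : tsgn t r = 1 := by rw [tsgn, if_neg h]

lemma tsgn_neg {t r : W} (h : r = t) : tsgn t r = -1 := by rw [tsgn, if_pos h]

/-- the sign of `t` relative to a word, via the right inversion sequence -/
noncomputable def wsgn (cs : CoxeterSystem M W) (ω : List B) (t : W) : ℤˣ :=
  ((cs.rightInvSeq ω).map (tsgn t)).prod

lemma wsgn_nil (cs : CoxeterSystem M W) (t : W) : wsgn cs [] t = 1 := rfl

lemma wsgn_cons (cs : CoxeterSystem M W) (i : B) (ω : List B) (t : W) :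
    wsgn cs (i :: ω) t =
      tsgn t ((cs.wordProd ω)⁻¹ * cs.simple i * cs.wordProd ω) * wsgn cs ω t := by
  simp [wsgn, CoxeterSystem.rightInvSeq]

lemma wsgn_eq_one_of_not_mem (cs : CoxeterSystem M W) (ω : List B) (t : W)
    (h : t ∉ cs.rightInvSeq ω) : wsgn cs ω t = 1 := by
  apply List.prod_eq_one
  intro x hx
  obtain ⟨r, hr, rfl⟩ := List.mem_map.mp hx
  exact tsgn_pos (fun hrt => h (hrt ▸ hr))

lemma mem_of_wsgn_ne_one (cs : CoxeterSystem M W) (ω : List B) (t : W)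
    (h : wsgn cs ω t ≠ 1) : t ∈ cs.rightInvSeq ω :=
  by_contra fun hc => h (wsgn_eq_one_of_not_mem cs ω t hc)

/-- the building-block involution of `W × ℤˣ` -/
noncomputable def gperm (cs : CoxeterSystem M W) (i : B) : Equiv.Perm (W × ℤˣ) :=
  Function.Involutive.toPerm
    (fun p => (cs.simple i * p.1 * cs.simple i, tsgn (cs.simple i) p.1 * p.2))
    (by
      rintro ⟨t, e⟩
      simp only [Prod.mk.injEq]
      constructor
      · rw [← mul_assoc, ← mul_assoc]
        simp [cs.simple_mul_simple_cancel_left, cs.simple_mul_simple_cancel_right,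
          mul_assoc]
      · by_cases h : t = cs.simple i
        · subst h
          have e1 : cs.simple i * cs.simple i * cs.simple i = cs.simple i := by
            rw [cs.simple_mul_simple_self, one_mul]
          have e2 := tsgn_neg (t := cs.simple i) (r := cs.simple i) rfl
          rw [e1, e2]
          simp
        · have h2 : cs.simple i * t * cs.simple i ≠ cs.simple i := by
            intro hc
            apply h
            have := congrArg (fun z => cs.simple i * z * cs.simple i) hc
            simp only [mul_assoc, cs.simple_mul_simple_cancel_left,
              cs.simple_mul_simple_self, mul_one] at this
            simpa using this
          rw [tsgn_pos h2, tsgn_pos h, one_mul, one_mul])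

lemma gperm_apply (cs : CoxeterSystem M W) (i : B) (t : W) (e : ℤˣ) :
    gperm cs i (t, e) = (cs.simple i * t * cs.simple i, tsgn (cs.simple i) t * e) := rfl

lemma tsgn_congr {t r t' r' : W} (h : (r = t) ↔ (r' = t')) : tsgn t r = tsgn t' r' := by
  by_cases hc : r = t
  · rw [tsgn, if_pos hc, tsgn, if_pos (h.mp hc)]
  · rw [tsgn, if_neg hc, tsgn, if_neg (fun hc2 => hc (h.mpr hc2))]

lemma prod_map_alternatingWord {G : Type*} [Monoid G] (F : B → G) (i j : B) (m : ℕ) :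
    ((CoxeterSystem.alternatingWord i j m).map F).prod
      = (if Even m then 1 else F j) * (F i * F j) ^ (m / 2) := by
  induction' m with m ih
  · simp [CoxeterSystem.alternatingWord]
  · rw [CoxeterSystem.alternatingWord_succ', List.map_cons, List.prod_cons, ih]
    by_cases hm : Even m
    · have h₁ : ¬ Even (m + 1) := by simp [hm, parity_simps]
      have h₂ : (m + 1) / 2 = m / 2 := Nat.succ_div_of_not_dvd <| by rwa [← even_iff_two_dvd]
      simp [hm, h₁, h₂]
    · have h₁ : Even (m + 1) := by simp [hm, parity_simps]
      have h₂ : (m + 1) / 2 = m / 2 + 1 := Nat.succ_div_of_dvd h₁.two_dvd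
      simp [hm, h₁, h₂, ← pow_succ', ← mul_assoc]

lemma drop_alternatingWord (i j : B) (d m : ℕ) :
    (CoxeterSystem.alternatingWord i j m).drop d = CoxeterSystem.alternatingWord i j (m - d) := by
  induction' d with d ih generalizing m
  · simp
  · cases' m with m
    · simp [CoxeterSystem.alternatingWord]
    · rw [CoxeterSystem.alternatingWord_succ' i j m, List.drop_succ_cons,
        (by omega : m + 1 - (d + 1) = m - d), ih]

lemma get?_alternatingWord (i j : B) (m k : ℕ) (hk : k < m) :
    (CoxeterSystem.alternatingWord i j m)[k]?
      = some (if Even (m - k - 1) then j else i) := by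
  have h1 : (CoxeterSystem.alternatingWord i j m)[k]?
      = ((CoxeterSystem.alternatingWord i j m).drop k)[0]? := by
    rw [List.getElem?_drop, Nat.add_zero]
  rw [h1, drop_alternatingWord]
  have h2 : m - k = (m - k - 1) + 1 := by omega
  rw [h2, CoxeterSystem.alternatingWord_succ']
  rfl


lemma prod_gperm_apply (cs : CoxeterSystem M W) (ω : List B) (t : W) (e : ℤˣ) :
    ((ω.map (gperm cs)).prod) (t, e)
      = (cs.wordProd ω * t * (cs.wordProd ω)⁻¹, wsgn cs ω t * e) := by
  induction' ω with i ω ih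
  · simp [wsgn_nil]
  · rw [List.map_cons, List.prod_cons, Equiv.Perm.mul_apply, ih, gperm_apply,
      wsgn_cons]
    have h1 : cs.simple i * (cs.wordProd ω * t * (cs.wordProd ω)⁻¹) * cs.simple i
        = cs.wordProd (i :: ω) * t * (cs.wordProd (i :: ω))⁻¹ := by
      rw [cs.wordProd_cons, mul_inv_rev, cs.inv_simple]
      group
    have h2 : tsgn (cs.simple i) (cs.wordProd ω * t * (cs.wordProd ω)⁻¹)
        = tsgn t ((cs.wordProd ω)⁻¹ * cs.simple i * cs.wordProd ω) := by
      apply tsgn_congr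
      constructor
      · intro h
        rw [← h]; group
      · intro h
        rw [← h]; group
    rw [h1, h2, ← mul_assoc]

lemma ris_alternatingWord_getD (cs : CoxeterSystem M W) (i j : B) (n k : ℕ) (hk : k < 2 * n) :
    (cs.rightInvSeq (CoxeterSystem.alternatingWord i j (2 * n))).getD k 1
      = (cs.simple i * cs.simple j) ^ (-((2 * n - k - 1 : ℕ) : ℤ)) * cs.simple j := by
  set z := cs.simple i * cs.simple j with hz
  have conj : ∀ a : ℤ, cs.simple j * z ^ a = z ^ (-a) * cs.simple j := by
    intro a
    have key : cs.simple j * z * (cs.simple j)⁻¹ = z⁻¹ := by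
      rw [hz, cs.inv_simple, mul_inv_rev, cs.inv_simple, cs.inv_simple]
      simp [mul_assoc, cs.simple_mul_simple_self]
    have h3 : (MulAut.conj (cs.simple j)) (z ^ a) = ((MulAut.conj (cs.simple j)) z) ^ a :=
      map_zpow _ _ _
    simp only [MulAut.conj_apply] at h3
    rw [key] at h3
    calc cs.simple j * z ^ a
        = cs.simple j * z ^ a * (cs.simple j)⁻¹ * cs.simple j := by
          rw [cs.inv_simple, cs.simple_mul_simple_cancel_right]
      _ = z⁻¹ ^ a * cs.simple j := by rw [h3]
      _ = z ^ (-a) * cs.simple j := by rw [inv_zpow, zpow_neg]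
  set r := 2 * n - k - 1 with hr
  rw [cs.getD_rightInvSeq, drop_alternatingWord,
    get?_alternatingWord i j (2*n) k hk, (by omega : 2 * n - (k + 1) = r)]
  rw [cs.prod_alternatingWord_eq_mul_pow]
  rw [← hz, ← hr]
  simp only [Option.map_some, Option.getD_some]
  rw [← zpow_natCast z (r / 2)]
  set q : ℤ := ((r / 2 : ℕ) : ℤ) with hq
  by_cases hpar : Even r
  · rw [if_pos hpar, if_pos hpar, one_mul]
    obtain ⟨c, hc⟩ := hpar
    have hsum : r / 2 + r / 2 = r := by omega
    have hqq : -q + -q = -((r : ℕ) : ℤ) := by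
      rw [hq]
      omega
    calc (z ^ q)⁻¹ * cs.simple j * z ^ q
        = z ^ (-q) * (cs.simple j * z ^ q) := by rw [zpow_neg, mul_assoc]
      _ = z ^ (-q) * (z ^ (-q) * cs.simple j) := by rw [conj]
      _ = z ^ (-q + -q) * cs.simple j := by rw [← mul_assoc, ← zpow_add]
      _ = z ^ (-((r : ℕ) : ℤ)) * cs.simple j := by rw [hqq]
  · rw [if_neg hpar, if_neg hpar]
    have hodd : Odd r := Nat.not_even_iff_odd.mp hpar
    obtain ⟨c, hc⟩ := hodd
    have hsum : r / 2 + (r / 2 + 1) = r := by omega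
    have hqq : -q + -(1 + q) = -((r : ℕ) : ℤ) := by
      rw [hq]
      omega
    calc (cs.simple j * z ^ q)⁻¹ * cs.simple i * (cs.simple j * z ^ q)
        = z ^ (-q) * cs.simple j * (cs.simple i * (cs.simple j * z ^ q)) := by
          rw [mul_inv_rev, cs.inv_simple, zpow_neg, mul_assoc]
      _ = z ^ (-q) * cs.simple j * (z ^ (1 + q)) := by
          rw [← mul_assoc (cs.simple i), ← hz, zpow_add, zpow_one]
      _ = z ^ (-q) * (z ^ (-(1+q)) * cs.simple j) := by rw [mul_assoc, conj]
      _ = z ^ (-q + -(1+q)) * cs.simple j := by rw [← mul_assoc, ← zpow_add]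
      _ = z ^ (-((r : ℕ) : ℤ)) * cs.simple j := by rw [hqq]

lemma ris_alternatingWord_halves (cs : CoxeterSystem M W) (i j : B) (n : ℕ)
    (hzn : (cs.simple i * cs.simple j) ^ n = 1) :
    ∃ l : List W, cs.rightInvSeq (CoxeterSystem.alternatingWord i j (2 * n)) = l ++ l := by
  set L := cs.rightInvSeq (CoxeterSystem.alternatingWord i j (2 * n)) with hL
  have hlen : L.length = 2 * n := by
    rw [hL, cs.length_rightInvSeq, CoxeterSystem.length_alternatingWord]
  refine ⟨L.take n, ?_⟩
  have hdt : L.drop n = L.take n := by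
    apply List.ext_getElem
    · simp [hlen]; omega
    · intro k h1 h2
      have hk : k < n := by
        simp only [List.length_drop, hlen] at h1
        omega
      have e1 : (L.drop n)[k] = L[n + k]'(by omega) := List.getElem_drop
      have e2 : (L.take n)[k] = L[k]'(by omega) := List.getElem_take
      rw [e1, e2, ← List.getD_eq_getElem L 1, ← List.getD_eq_getElem L 1]
      rw [hL, ris_alternatingWord_getD cs i j n (n + k) (by omega),
        ris_alternatingWord_getD cs i j n k (by omega)]
      have hzn' : (cs.simple i * cs.simple j) ^ ((n : ℕ) : ℤ) = 1 := by
        rw [zpow_natCast, hzn]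
      have harith : (2 * n - k - 1 : ℕ) = (2 * n - (n + k) - 1 : ℕ) + n := by omega
      congr 1
      rw [harith]
      push_cast
      have hz1 : (cs.simple i * cs.simple j) ^ (-((n:ℕ) : ℤ)) = 1 := by
        rw [zpow_neg, hzn', inv_one]
      rw [neg_add, zpow_add, hz1, mul_one]
  conv_lhs => rw [← List.take_append_drop n L, hdt]

lemma wsgn_alternatingWord (cs : CoxeterSystem M W) (i j : B) (t : W) :
    wsgn cs (CoxeterSystem.alternatingWord i j (2 * M i j)) t = 1 := by
  obtain ⟨l, hl⟩ := ris_alternatingWord_halves cs i j (M i j) (cs.simple_mul_simple_pow i j)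
  rw [wsgn, hl, List.map_append, List.prod_append, Int.units_mul_self]

lemma gperm_liftable (cs : CoxeterSystem M W) : M.IsLiftable (gperm cs) := by
  intro i j
  have h0 : (gperm cs i * gperm cs j) ^ (M i j)
      = ((CoxeterSystem.alternatingWord i j (2 * M i j)).map (gperm cs)).prod := by
    rw [prod_map_alternatingWord (gperm cs) i j (2 * M i j)]
    rw [if_pos (even_two_mul _), one_mul, Nat.mul_div_cancel_left _ (by norm_num)]
  rw [h0]
  apply Equiv.ext
  rintro ⟨t, e⟩
  rw [prod_gperm_apply, wsgn_alternatingWord]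
  have hπ : cs.wordProd (CoxeterSystem.alternatingWord i j (2 * M i j)) = 1 := by
    rw [cs.prod_alternatingWord_eq_mul_pow, if_pos (even_two_mul _), one_mul,
      Nat.mul_div_cancel_left _ (by norm_num), cs.simple_mul_simple_pow]
  rw [hπ]
  simp

/-- The sign representation on reflections. -/
noncomputable def mu (cs : CoxeterSystem M W) : W →* Equiv.Perm (W × ℤˣ) :=
  cs.lift ⟨gperm cs, gperm_liftable cs⟩

lemma mu_simple (cs : CoxeterSystem M W) (i : B) : mu cs (cs.simple i) = gperm cs i :=
  cs.lift_apply_simple (gperm_liftable cs) i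

lemma mu_wordProd (cs : CoxeterSystem M W) (ω : List B) :
    mu cs (cs.wordProd ω) = (ω.map (gperm cs)).prod := by
  induction' ω with i ω ih
  · simp [cs.wordProd_nil]
  · rw [cs.wordProd_cons, map_mul, mu_simple, ih, List.map_cons, List.prod_cons]

lemma mu_apply (cs : CoxeterSystem M W) (ω : List B) (t : W) (e : ℤˣ) :
    mu cs (cs.wordProd ω) (t, e)
      = (cs.wordProd ω * t * (cs.wordProd ω)⁻¹, wsgn cs ω t * e) := by
  rw [mu_wordProd, prod_gperm_apply]

lemma mu_apply' (cs : CoxeterSystem M W) (v : W) (t : W) :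
    ∃ d : ℤˣ, (∀ e' : ℤˣ, mu cs v (t, e') = (v * t * v⁻¹, d * e')) := by
  obtain ⟨ω, hω⟩ := cs.wordProd_surjective v
  subst hω
  exact ⟨wsgn cs ω t, fun e' => mu_apply cs ω t e'⟩

lemma mu_refl_flip (cs : CoxeterSystem M W) {t : W} (ht : cs.IsReflection t) (e : ℤˣ) :
    mu cs t (t, e) = (t, -e) := by
  obtain ⟨v, k, rfl⟩ := ht
  set t := v * cs.simple k * v⁻¹ with hts
  obtain ⟨d1, hd1⟩ := mu_apply' cs v⁻¹ t
  obtain ⟨d2, hd2⟩ := mu_apply' cs v (cs.simple k)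
  have hk : v⁻¹ * t * (v⁻¹)⁻¹ = cs.simple k := by rw [hts]; group
  have hd1' : ∀ e' : ℤˣ, mu cs v⁻¹ (t, e') = (cs.simple k, d1 * e') := by
    intro e'; rw [hd1 e', hk]
  have hid : d2 * d1 = 1 := by
    have h1 : mu cs v (mu cs v⁻¹ (t, 1)) = (t, 1) := by
      rw [← Equiv.Perm.mul_apply, ← map_mul, mul_inv_cancel, map_one, Equiv.Perm.one_apply]
    rw [hd1' 1, hd2 (d1 * 1), ← hts] at h1
    have := congrArg Prod.snd h1
    simpa [mul_assoc] using this
  have hsk : mu cs (cs.simple k) (cs.simple k, d1 * e) = (cs.simple k, -(d1 * e)) := by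
    rw [mu_simple, gperm_apply]
    have e1 : cs.simple k * cs.simple k * cs.simple k = cs.simple k := by
      rw [cs.simple_mul_simple_self, one_mul]
    have e2 := tsgn_neg (t := cs.simple k) (r := cs.simple k) rfl
    rw [e1, e2]
    simp
  have hfactor : mu cs t (t, e) = mu cs v (mu cs (cs.simple k) (mu cs v⁻¹ (t, e))) := by
    rw [← Equiv.Perm.mul_apply, ← Equiv.Perm.mul_apply, ← map_mul, ← map_mul, hts,
      mul_assoc]
  rw [hfactor, hd1' e, hsk, hd2 _, ← hts]
  have : d2 * -(d1 * e) = -e := by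
    rw [mul_neg, ← mul_assoc, hid, one_mul]
  rw [this]

theorem strong_exchange_right (cs : CoxeterSystem M W) {w t : W} (ht : cs.IsReflection t)
    (hlt : ℓ cs (w * t) < ℓ cs w) :
    ∀ ω : List B, cs.wordProd ω = w → t ∈ cs.rightInvSeq ω := by
  intro ω hω
  set u := w * t with hu
  have huw : u * t = w := by rw [hu, mul_assoc, ht.mul_self, mul_one]
  obtain ⟨ψ, hψred, hψ⟩ := cs.exists_reduced_word' u
  have hnot : t ∉ cs.rightInvSeq ψ := by
    intro hmem
    have h2 := (cs.isRightInversion_of_mem_rightInvSeq hψred hmem).2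
    rw [← hψ, huw] at h2
    omega
  have h1 : wsgn cs ψ t = 1 := wsgn_eq_one_of_not_mem cs ψ t hnot
  have hcomp : mu cs w (t, 1) = (u * t * u⁻¹, -1) := by
    have : mu cs w (t, 1) = mu cs u (mu cs t (t, 1)) := by
      rw [← Equiv.Perm.mul_apply, ← map_mul, huw]
    rw [this, mu_refl_flip cs ht, hψ, mu_apply, h1, one_mul, ← hψ]
  have hcomp2 : mu cs w (t, 1) = (w * t * w⁻¹, wsgn cs ω t * 1) := by
    rw [← hω, mu_apply]
  rw [hcomp] at hcomp2
  have hsgn : wsgn cs ω t = -1 := by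
    have := congrArg Prod.snd hcomp2
    simp only [mul_one] at this
    exact this.symm
  apply mem_of_wsgn_ne_one
  rw [hsgn]
  decide

theorem exchange_right_erase (cs : CoxeterSystem M W) {w t : W} (ht : cs.IsReflection t)
    (hlt : ℓ cs (w * t) < ℓ cs w) {ω : List B} (hω : cs.wordProd ω = w) :
    ∃ k, k < ω.length ∧ w * t = cs.wordProd (ω.eraseIdx k) := by
  have hmem := strong_exchange_right cs ht hlt ω hω
  obtain ⟨k, hk, hel⟩ := List.mem_iff_getElem.mp hmem
  rw [cs.length_rightInvSeq] at hk
  refine ⟨k, hk, ?_⟩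
  have hgd : (cs.rightInvSeq ω).getD k 1 = t := by
    rw [List.getD_eq_getElem _ 1 (by rw [cs.length_rightInvSeq]; exact hk), hel]
  rw [← hω, ← hgd, cs.wordProd_mul_getD_rightInvSeq]

theorem exchange_left_erase (cs : CoxeterSystem M W) {y : W} {i : B}
    (hlt : ℓ cs (cs.simple i * y) < ℓ cs y) {ψ : List B} (hψ : cs.wordProd ψ = y) :
    ∃ k, k < ψ.length ∧ cs.simple i * y = cs.wordProd (ψ.eraseIdx k) := by
  have ht : cs.IsReflection (y⁻¹ * cs.simple i * y) := ⟨y⁻¹, i, by group⟩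
  have h1 : y * (y⁻¹ * cs.simple i * y) = cs.simple i * y := by group
  have hlt' : ℓ cs (y * (y⁻¹ * cs.simple i * y)) < ℓ cs y := by rw [h1]; exact hlt
  obtain ⟨k, hk, he⟩ := exchange_right_erase cs ht hlt' hψ
  exact ⟨k, hk, by rw [← h1, he]⟩

theorem deletion_aux (cs : CoxeterSystem M W) (n : ℕ) :
    ∀ ω : List B, ω.length ≤ n →
      ∃ ψ : List B, ψ.Sublist ω ∧ cs.IsReduced ψ ∧ cs.wordProd ψ = cs.wordProd ω := by
  induction' n with n ih
  · intro ω hω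
    rw [Nat.le_zero, List.length_eq_zero_iff] at hω
    subst hω
    exact ⟨[], List.Sublist.refl _, by simp [CoxeterSystem.IsReduced], rfl⟩
  · intro ω hω
    by_cases hred : cs.IsReduced ω
    · exact ⟨ω, List.Sublist.refl _, hred, rfl⟩
    have hne : ω ≠ [] := by
      intro h
      subst h
      exact hred (by simp [CoxeterSystem.IsReduced])
    have hlen1 : 1 ≤ ω.length := List.length_pos_iff.mpr hne
    haveI : DecidablePred (fun k => ¬ cs.IsReduced (ω.take (k+1))) :=
      fun _ => Classical.propDecidable _
    have hex : ∃ k, ¬ cs.IsReduced (ω.take (k+1)) := by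
      refine ⟨ω.length - 1, ?_⟩
      rw [(by omega : ω.length - 1 + 1 = ω.length), List.take_length]
      exact hred
    set k := Nat.find hex with hkdef
    have hk1 : ¬ cs.IsReduced (ω.take (k+1)) := Nat.find_spec hex
    have hkbound : k ≤ ω.length - 1 := Nat.find_le (by
      rw [(by omega : ω.length - 1 + 1 = ω.length), List.take_length]
      exact hred)
    have hklt : k < ω.length := by omega
    have hkpos : 1 ≤ k := by
      rcases Nat.eq_zero_or_pos k with h0 | h1
      · exfalso
        apply hk1
        rw [h0]
        obtain ⟨a, ω', rfl⟩ := List.exists_cons_of_ne_nil hne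
        rw [(rfl : (0:ℕ) + 1 = 1)]
        have htk : (a :: ω').take 1 = [a] := rfl
        rw [htk]
        show ℓ cs (cs.wordProd [a]) = [a].length
        rw [cs.wordProd_singleton, cs.length_simple]
        rfl
      · exact h1
    have hk2 : cs.IsReduced (ω.take k) := by
      by_contra hc
      have := Nat.find_min hex (m := k - 1) (by omega)
      rw [(by omega : k - 1 + 1 = k)] at this
      exact this hc
    set x := cs.wordProd (ω.take k) with hx
    have hlx : ℓ cs x = k := by
      rw [hx, hk2]
      rw [List.length_take]
      omega
    have htake : ω.take (k+1) = ω.take k ++ [ω[k]'hklt] := by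
      rw [List.take_succ, List.getElem?_eq_getElem hklt]
      rfl
    set i := ω[k]'hklt with hi
    have hπtake : cs.wordProd (ω.take (k+1)) = x * cs.simple i := by
      rw [htake, cs.wordProd_append, cs.wordProd_singleton]
    have hxi : ℓ cs (x * cs.simple i) < ℓ cs x := by
      have hne2 : ℓ cs (x * cs.simple i) ≠ k + 1 := by
        intro hc
        apply hk1
        show ℓ cs (cs.wordProd (ω.take (k+1))) = (ω.take (k+1)).length
        rw [hπtake, hc, List.length_take]
        omega
      rcases cs.length_mul_simple x i with h | h
      · exact absurd (by rw [h, hlx]) hne2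
      · omega
    obtain ⟨m, hm, he⟩ := exchange_right_erase cs (cs.isReflection_simple i) hxi
      (ω := ω.take k) rfl
    set ω' := (ω.take k).eraseIdx m ++ ω.drop (k+1) with hω'
    have hπ : cs.wordProd ω' = cs.wordProd ω := by
      conv_rhs => rw [← List.take_append_drop (k+1) ω]
      rw [hω', cs.wordProd_append, cs.wordProd_append, ← he, hπtake]
    have hlen' : ω'.length ≤ n := by
      have h6 : (ω.take k).length = k := by rw [List.length_take]; omega
      have h5 : ((ω.take k).eraseIdx m).length + 1 = (ω.take k).length :=
        List.length_eraseIdx_add_one (by omega)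
      rw [hω', List.length_append, List.length_drop]
      omega
    obtain ⟨ψ, hsub, hψred, hψprod⟩ := ih ω' hlen'
    refine ⟨ψ, ?_, hψred, hψprod.trans hπ⟩
    have s1 : ω'.Sublist (ω.take k ++ ω.drop (k+1)) :=
      List.Sublist.append (List.eraseIdx_sublist _ m) (List.Sublist.refl _)
    have s2 : (ω.take k ++ ω.drop (k+1)).Sublist ω := by
      rw [← List.eraseIdx_eq_take_drop_succ]
      exact List.eraseIdx_sublist ω k
    exact hsub.trans (s1.trans s2)

theorem deletion (cs : CoxeterSystem M W) (ω : List B) :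
    ∃ ψ : List B, ψ.Sublist ω ∧ cs.IsReduced ψ ∧ cs.wordProd ψ = cs.wordProd ω :=
  deletion_aux cs ω.length ω le_rfl

theorem wordProd_mem_closure (cs : CoxeterSystem M W) (T : Set B) (l : List B)
    (hl : ∀ i ∈ l, i ∈ T) : cs.wordProd l ∈ Subgroup.closure (cs.simple '' T) := by
  rw [CoxeterSystem.wordProd]
  apply Subgroup.list_prod_mem
  intro x hx
  obtain ⟨i, hi, rfl⟩ := List.mem_map.mp hx
  exact Subgroup.subset_closure ⟨i, hl i hi, rfl⟩

theorem closure_word (cs : CoxeterSystem M W) (T : Set B) {u : W}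
    (hu : u ∈ Subgroup.closure (cs.simple '' T)) :
    ∃ l : List B, (∀ i ∈ l, i ∈ T) ∧ cs.wordProd l = u := by
  induction hu using Subgroup.closure_induction with
  | mem x hx =>
      obtain ⟨i, hi, rfl⟩ := hx
      exact ⟨[i], by simpa using hi, cs.wordProd_singleton i⟩
  | one => exact ⟨[], by simp, cs.wordProd_nil⟩
  | mul x y hx hy ihx ihy =>
      obtain ⟨l1, h1, rfl⟩ := ihx
      obtain ⟨l2, h2, rfl⟩ := ihy
      refine ⟨l1 ++ l2, ?_, (cs.wordProd_append l1 l2)⟩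
      intro i hi
      rcases List.mem_append.mp hi with h | h
      · exact h1 i h
      · exact h2 i h
  | inv x hx ihx =>
      obtain ⟨l, h1, rfl⟩ := ihx
      refine ⟨l.reverse, ?_, cs.wordProd_reverse l⟩
      intro i hi
      exact h1 i (List.mem_reverse.mp hi)

theorem closure_reduced_word (cs : CoxeterSystem M W) (T : Set B) {u : W}
    (hu : u ∈ Subgroup.closure (cs.simple '' T)) :
    ∃ l : List B, (∀ i ∈ l, i ∈ T) ∧ cs.IsReduced l ∧ cs.wordProd l = u := by
  obtain ⟨l, hl, hprod⟩ := closure_word cs T hu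
  obtain ⟨ψ, hsub, hred, hpr⟩ := deletion cs l
  exact ⟨ψ, fun i hi => hl i (hsub.subset hi), hred, hpr.trans hprod⟩

/-- one step of the Bruhat order: multiply by a reflection on the right, increasing length -/
def bstep (cs : CoxeterSystem M W) (x y : W) : Prop :=
  ∃ t : W, cs.IsReflection t ∧ y = x * t ∧ ℓ cs x < ℓ cs y

/-- Bruhat order -/
def ble (cs : CoxeterSystem M W) : W → W → Prop := Relation.ReflTransGen (bstep cs)

lemma ble_refl (cs : CoxeterSystem M W) (x : W) : ble cs x x := Relation.ReflTransGen.refl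

lemma ble_trans (cs : CoxeterSystem M W) {x y z : W} (h1 : ble cs x y) (h2 : ble cs y z) :
    ble cs x z := Relation.ReflTransGen.trans h1 h2

lemma ble_length (cs : CoxeterSystem M W) {x y : W} (h : ble cs x y) : ℓ cs x ≤ ℓ cs y := by
  induction h with
  | refl => exact le_rfl
  | tail h1 h2 ih =>
      obtain ⟨t, _, _, hlt⟩ := h2
      omega

lemma one_ble (cs : CoxeterSystem M W) (v : W) : ble cs 1 v := by
  generalize hn : ℓ cs v = n
  induction' n using Nat.strong_induction_on with n ih generalizing v
  by_cases hv : v = 1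
  · subst hv; exact ble_refl cs 1
  · obtain ⟨k, hk⟩ := cs.exists_rightDescent_of_ne_one hv
    have hlt : ℓ cs (v * cs.simple k) < ℓ cs v := hk
    have h1 : ble cs 1 (v * cs.simple k) := ih (ℓ cs (v * cs.simple k)) (by omega) _ rfl
    apply Relation.ReflTransGen.tail h1
    refine ⟨cs.simple k, cs.isReflection_simple k, ?_, by omega⟩
    rw [mul_assoc, cs.simple_mul_simple_self, mul_one]

/-- The subword property of the Bruhat order. -/
theorem ble_subword (cs : CoxeterSystem M W) :
    ∀ n : ℕ, ∀ w : W, ℓ cs w ≤ n → ∀ u : W, ble cs u w →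
      ∀ ω : List B, cs.IsReduced ω → cs.wordProd ω = w →
        ∃ ψ : List B, ψ.Sublist ω ∧ cs.IsReduced ψ ∧ cs.wordProd ψ = u := by
  intro n
  induction' n using Nat.strong_induction_on with n ih
  intro w hw u hle ω hred hω
  rcases Relation.ReflTransGen.cases_tail hle with h | ⟨v, hv, t, hrefl, hwv, hlt⟩
  · exact ⟨ω, List.Sublist.refl _, hred, h ▸ hω⟩
  · -- w = v * t with ℓ v < ℓ w, and u ≤ v
    have hvw : v = w * t := by
      rw [hwv, mul_assoc, hrefl.mul_self, mul_one]
    have hwt : ℓ cs (w * t) < ℓ cs w := by rw [← hvw]; exact hlt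
    obtain ⟨k, hk, he⟩ := exchange_right_erase cs hrefl hwt hω
    obtain ⟨ω', hsub', hred', hprod'⟩ := deletion cs (ω.eraseIdx k)
    have hω'v : cs.wordProd ω' = v := by rw [hprod', ← he, ← hvw]
    have hlv : ℓ cs v ≤ n - 1 := by
      have := hlt
      omega
    rcases Nat.eq_zero_or_pos n with h0 | hpos
    · exfalso; omega
    obtain ⟨ψ, hs, hr, hp⟩ := ih (n-1) (by omega) v hlv u hv ω' hred' hω'v
    exact ⟨ψ, hs.trans (hsub'.trans (List.eraseIdx_sublist ω k)), hr, hp⟩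

lemma sublist_concat_cases {α : Type*} {ψ ω : List α} {a : α} (h : ψ.Sublist (ω ++ [a])) :
    ψ.Sublist ω ∨ ∃ ψ₁, ψ = ψ₁ ++ [a] ∧ ψ₁.Sublist ω := by
  rcases List.sublist_append_iff.mp h with ⟨l₁, l₂, rfl, h1, h2⟩
  rcases List.sublist_singleton.mp h2 with rfl | rfl
  · left; simpa using h1
  · right; exact ⟨l₁, rfl, h1⟩

theorem bigZ (cs : CoxeterSystem M W) : ∀ n : ℕ,
    (∀ ω ψ : List B, ω.length ≤ n → cs.IsReduced ω → cs.IsReduced ψ → ψ.Sublist ω →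
        ble cs (cs.wordProd ψ) (cs.wordProd ω)) ∧
    (∀ w : W, ℓ cs w ≤ n → ∀ u : W, ∀ j : B, ble cs u w →
        ℓ cs w < ℓ cs (w * cs.simple j) → ℓ cs u < ℓ cs (u * cs.simple j) →
        ble cs (u * cs.simple j) (w * cs.simple j)) ∧
    (∀ w : W, ℓ cs w ≤ n → ∀ u : W, ∀ j : B, ℓ cs (w * cs.simple j) < ℓ cs w →
        ℓ cs u < ℓ cs (u * cs.simple j) → ble cs u w → ble cs (u * cs.simple j) w) := by
  intro n
  induction' n with n ihn
  · refine ⟨?_, ?_, ?_⟩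
    · intro ω ψ hlen _ _ hsub
      rw [Nat.le_zero, List.length_eq_zero_iff] at hlen
      subst hlen
      rw [List.sublist_nil.mp hsub]
      exact ble_refl cs _
    · intro w hw u j hle _ _
      rw [Nat.le_zero, cs.length_eq_zero_iff] at hw
      subst hw
      have hu : u = 1 := by
        have := ble_length cs hle
        rw [cs.length_one] at this
        rw [← cs.length_eq_zero_iff]
        omega
      subst hu
      exact ble_refl cs _
    · intro w hw u j hdes _ _
      exfalso
      omega
  · obtain ⟨ih1, ih2, ih3⟩ := ihn
    have p3 : ∀ w : W, ℓ cs w ≤ n + 1 → ∀ u : W, ∀ j : B, ℓ cs (w * cs.simple j) < ℓ cs w →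
        ℓ cs u < ℓ cs (u * cs.simple j) → ble cs u w → ble cs (u * cs.simple j) w := by
      intro w hw u j hdes hascu hle
      obtain ⟨ω₁, hred₁, hw₁⟩ := cs.exists_reduced_word' (w * cs.simple j)
      have hlenw : ℓ cs (w * cs.simple j) + 1 = ℓ cs w := by
        rcases cs.length_mul_simple w j with h | h
        · omega
        · omega
      have hπω : cs.wordProd (ω₁ ++ [j]) = w := by
        rw [cs.wordProd_append, cs.wordProd_singleton, ← hw₁, mul_assoc,
          cs.simple_mul_simple_self, mul_one]
      have hlω₁ : ω₁.length = ℓ cs (w * cs.simple j) := by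
        rw [← hred₁]
        rw [← hw₁]
      have hredω : cs.IsReduced (ω₁ ++ [j]) := by
        show ℓ cs (cs.wordProd (ω₁ ++ [j])) = (ω₁ ++ [j]).length
        rw [hπω, List.length_append, List.length_singleton, hlω₁]
        omega
      obtain ⟨ψ, hsub, hψred, hψu⟩ :=
        ble_subword cs (ℓ cs w) w le_rfl u hle (ω₁ ++ [j]) hredω hπω
      rcases sublist_concat_cases hsub with hcase | ⟨ψ₁, rfl, hψ₁⟩
      · have h1 : ble cs u (w * cs.simple j) := by
          rw [← hψu, hw₁]
          exact ih1 ω₁ ψ (by omega) hred₁ hψred hcase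
        have h2 := ih2 (w * cs.simple j) (by omega) u j h1
          (by rw [mul_assoc, cs.simple_mul_simple_self, mul_one]; omega) hascu
        rw [mul_assoc, cs.simple_mul_simple_self, mul_one] at h2
        exact h2
      · exfalso
        have hu2 : u * cs.simple j = cs.wordProd ψ₁ := by
          rw [← hψu, cs.wordProd_append, cs.wordProd_singleton, mul_assoc,
            cs.simple_mul_simple_self, mul_one]
        have hl1 : ℓ cs u = ψ₁.length + 1 := by
          rw [← hψu, hψred]
          rw [List.length_append, List.length_singleton]
        have hl2 : ℓ cs (u * cs.simple j) ≤ ψ₁.length := by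
          rw [hu2]
          exact cs.length_wordProd_le ψ₁
        omega
    have p2 : ∀ w : W, ℓ cs w ≤ n + 1 → ∀ u : W, ∀ j : B, ble cs u w →
        ℓ cs w < ℓ cs (w * cs.simple j) → ℓ cs u < ℓ cs (u * cs.simple j) →
        ble cs (u * cs.simple j) (w * cs.simple j) := by
      intro w hw u j hle hascw hascu
      rcases Relation.ReflTransGen.cases_tail hle with heq | ⟨v, huv, t, ht, hwv, hlt⟩
      · subst heq
        exact ble_refl cs _
      · have hlv : ℓ cs v ≤ n := by omega
        by_cases hvj : ℓ cs v < ℓ cs (v * cs.simple j)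
        · have h1 : ble cs (u * cs.simple j) (v * cs.simple j) :=
            ih2 v hlv u j huv hvj hascu
          apply Relation.ReflTransGen.tail h1
          refine ⟨cs.simple j * t * cs.simple j, ?_, ?_, ?_⟩
          · have := ht.conj (cs.simple j)
            rwa [cs.inv_simple] at this
          · rw [hwv]
            simp [mul_assoc, cs.simple_mul_simple_cancel_left]
          · have hvj1 : ℓ cs (v * cs.simple j) = ℓ cs v + 1 := by
              rcases cs.length_mul_simple v j with h | h
              · omega
              · omega
            omega
        · have hvj' : ℓ cs (v * cs.simple j) < ℓ cs v := by
            rcases cs.length_mul_simple v j with h | h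
            · omega
            · omega
          have h1 : ble cs (u * cs.simple j) v := ih3 v hlv u j hvj' hascu huv
          have h2 : ble cs (u * cs.simple j) w :=
            Relation.ReflTransGen.tail h1 ⟨t, ht, hwv, hlt⟩
          exact Relation.ReflTransGen.tail h2
            ⟨cs.simple j, cs.isReflection_simple j, rfl, hascw⟩
    refine ⟨?_, p2, p3⟩
    · intro ω ψ hlen hrω hrψ hsub
      rcases List.eq_nil_or_concat ω with rfl | ⟨ω₁, a, hcat⟩
      · rw [List.sublist_nil.mp hsub]
        exact ble_refl cs _
      · rw [List.concat_eq_append] at hcat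
        subst hcat
        have hredω₁ : cs.IsReduced ω₁ := by
          have h := CoxeterSystem.IsReduced.take hrω ω₁.length
          rwa [List.take_left] at h
        have hlenω₁ : ω₁.length ≤ n := by
          rw [List.length_append, List.length_singleton] at hlen
          omega
        have hπω : cs.wordProd (ω₁ ++ [a]) = cs.wordProd ω₁ * cs.simple a := by
          rw [cs.wordProd_append, cs.wordProd_singleton]
        have hlπω₁ : ℓ cs (cs.wordProd ω₁) = ω₁.length := hredω₁
        have hlπω : ℓ cs (cs.wordProd (ω₁ ++ [a])) = ω₁.length + 1 := by
          rw [hrω]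
          rw [List.length_append, List.length_singleton]
        rcases sublist_concat_cases hsub with hcase | ⟨ψ₁, rfl, hψ₁⟩
        · have h1 : ble cs (cs.wordProd ψ) (cs.wordProd ω₁) :=
            ih1 ω₁ ψ hlenω₁ hredω₁ hrψ hcase
          apply Relation.ReflTransGen.tail h1
          exact ⟨cs.simple a, cs.isReflection_simple a, hπω.symm ▸ rfl, by omega⟩
        · have hredψ₁ : cs.IsReduced ψ₁ := by
            have h := CoxeterSystem.IsReduced.take hrψ ψ₁.length
            rwa [List.take_left] at h
          have h1 : ble cs (cs.wordProd ψ₁) (cs.wordProd ω₁) :=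
            ih1 ω₁ ψ₁ hlenω₁ hredω₁ hredψ₁ hψ₁
          have hπψ : cs.wordProd (ψ₁ ++ [a]) = cs.wordProd ψ₁ * cs.simple a := by
            rw [cs.wordProd_append, cs.wordProd_singleton]
          have hlπψ : ℓ cs (cs.wordProd (ψ₁ ++ [a])) = ψ₁.length + 1 := by
            rw [hrψ]
            rw [List.length_append, List.length_singleton]
          have h2 := p2 (cs.wordProd ω₁) (by omega) (cs.wordProd ψ₁) a h1
            (by rw [← hπω]; rw [hlπω₁, hlπω]; omega)
            (by
              rw [← hπψ, hlπψ]
              have := cs.length_wordProd_le ψ₁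
              omega)
          rw [← hπω, ← hπψ] at h2
          exact h2

theorem main (cs : CoxeterSystem M W) (w : W) (T : Set B)
    (hT : ∀ i ∈ T, cs.IsLeftDescent w i) :
    (Subgroup.closure (cs.simple '' T) : Set W).Finite ∧
    ∃ Δ ∈ Subgroup.closure (cs.simple '' T),
      (∀ u ∈ Subgroup.closure (cs.simple '' T), cs.length u ≤ cs.length Δ) ∧
      cs.length Δ + cs.length (Δ⁻¹ * w) = cs.length w := by
  set G := Subgroup.closure (cs.simple '' T) with hG
  have hsimpleG : ∀ j ∈ T, cs.simple j ∈ G := fun j hj =>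
    Subgroup.subset_closure ⟨j, hj, rfl⟩
  -- minimal length element of the coset G * w
  have hSne : (Set.Nonempty {n : ℕ | ∃ z ∈ G, ℓ cs (z * w) = n}) :=
    ⟨ℓ cs w, 1, G.one_mem, by rw [one_mul]⟩
  obtain ⟨z₀, hz₀G, hz₀⟩ := Nat.sInf_mem hSne
  set x := z₀ * w with hx
  have hxmin : ∀ z ∈ G, ℓ cs x ≤ ℓ cs (z * w) := by
    intro z hz
    rw [hx, hz₀]
    exact Nat.sInf_le ⟨z, hz, rfl⟩
  -- key additivity fact
  have fact1 : ∀ u ∈ G, ℓ cs (u * x) = ℓ cs u + ℓ cs x := by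
    intro u huG
    generalize hn : ℓ cs u = n
    induction' n using Nat.strong_induction_on with n ihn generalizing u
    by_cases hu1 : u = 1
    · subst hu1
      rw [one_mul, ← hn, cs.length_one, zero_add]
    obtain ⟨l, hlT, hlred, hlprod⟩ := closure_reduced_word cs T huG
    have hlne : l ≠ [] := by
      intro h
      apply hu1
      rw [← hlprod, h, cs.wordProd_nil]
    obtain ⟨j, l₁, rfl⟩ := List.exists_cons_of_ne_nil hlne
    set u₁ := cs.wordProd l₁ with hu₁
    have hjT : j ∈ T := hlT j (List.mem_cons_self (a := j) (l := l₁))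
    have hu₁G : u₁ ∈ G :=
      wordProd_mem_closure cs T l₁ (fun i hi => hlT i (List.mem_cons_of_mem _ hi))
    have hredl₁ : cs.IsReduced l₁ := by
      have h := CoxeterSystem.IsReduced.drop hlred 1
      exact h
    have hul : u = cs.simple j * u₁ := by rw [← hlprod, cs.wordProd_cons]
    have hlu : ℓ cs u = l₁.length + 1 := by
      rw [← hlprod, hlred]
      rfl
    have hlu₁ : ℓ cs u₁ = l₁.length := hredl₁
    have ihu₁ : ℓ cs (u₁ * x) = ℓ cs u₁ + ℓ cs x :=
      ihn (ℓ cs u₁) (by omega) u₁ hu₁G rfl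
    rcases cs.length_simple_mul (u₁ * x) j with hcase | hcase
    · rw [hul, mul_assoc, hcase, ihu₁]
      omega
    · exfalso
      have hlt : ℓ cs (cs.simple j * (u₁ * x)) < ℓ cs (u₁ * x) := by omega
      obtain ⟨ξ, hξred, hξ⟩ := cs.exists_reduced_word' x
      have hψprod : cs.wordProd (l₁ ++ ξ) = u₁ * x := by
        rw [cs.wordProd_append, ← hu₁, ← hξ]
      obtain ⟨k, hk, he⟩ := exchange_left_erase cs hlt hψprod
      have hlξ : ξ.length = ℓ cs x := by rw [← hξred, ← hξ]
      by_cases hkl : k < l₁.length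
      · have herase : (l₁ ++ ξ).eraseIdx k = l₁.eraseIdx k ++ ξ :=
          List.eraseIdx_append_of_lt_length hkl ξ
        rw [herase, cs.wordProd_append, ← hξ] at he
        have hcancel : cs.simple j * u₁ = cs.wordProd (l₁.eraseIdx k) := by
          have h2 : cs.simple j * u₁ * x = cs.wordProd (l₁.eraseIdx k) * x := by
            rw [mul_assoc]
            exact he
          exact mul_right_cancel h2
        have hb : ℓ cs (cs.simple j * u₁) ≤ l₁.length - 1 := by
          rw [hcancel]
          have h3 := cs.length_wordProd_le (l₁.eraseIdx k)
          have h4 : (l₁.eraseIdx k).length + 1 = l₁.length :=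
            List.length_eraseIdx_add_one hkl
          omega
        rw [← hul] at hb
        omega
      · have herase : (l₁ ++ ξ).eraseIdx k = l₁ ++ ξ.eraseIdx (k - l₁.length) := by
          rw [List.eraseIdx_append_of_length_le (by omega : l₁.length ≤ k)]
        rw [herase, cs.wordProd_append, ← hu₁] at he
        have hcancel : (u₁⁻¹ * cs.simple j * u₁ * z₀) * w
            = cs.wordProd (ξ.eraseIdx (k - l₁.length)) := by
          calc (u₁⁻¹ * cs.simple j * u₁ * z₀) * w
              = u₁⁻¹ * (cs.simple j * (u₁ * x)) := by rw [hx]; group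
            _ = u₁⁻¹ * (u₁ * cs.wordProd (ξ.eraseIdx (k - l₁.length))) := by rw [he]
            _ = cs.wordProd (ξ.eraseIdx (k - l₁.length)) := by rw [inv_mul_cancel_left]
        have hzG : u₁⁻¹ * cs.simple j * u₁ * z₀ ∈ G :=
          G.mul_mem (G.mul_mem (G.mul_mem (G.inv_mem hu₁G) (hsimpleG j hjT)) hu₁G) hz₀G
        have hmin := hxmin _ hzG
        rw [hcancel] at hmin
        have hb := cs.length_wordProd_le (ξ.eraseIdx (k - l₁.length))
        have hklξ : k - l₁.length < ξ.length := by
          rw [List.length_append] at hk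
          omega
        have h4 : (ξ.eraseIdx (k - l₁.length)).length + 1 = ξ.length :=
          List.length_eraseIdx_add_one hklξ
        omega
  -- the longest element
  set Δ := z₀⁻¹ with hΔ
  have hΔG : Δ ∈ G := G.inv_mem hz₀G
  have hΔx : Δ * x = w := by rw [hΔ, hx, inv_mul_cancel_left]
  have hlw : ℓ cs Δ + ℓ cs x = ℓ cs w := by
    rw [← hΔx]
    exact (fact1 Δ hΔG).symm
  have hTΔ : ∀ j ∈ T, ℓ cs (cs.simple j * Δ) + 1 = ℓ cs Δ := by
    intro j hj
    have h1 : ℓ cs (cs.simple j * w) + 1 = ℓ cs w := by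
      have hd := hT j hj
      rcases cs.length_simple_mul w j with h | h
      · exact absurd hd (by rw [CoxeterSystem.IsLeftDescent]; omega)
      · omega
    have h2 : ℓ cs (cs.simple j * Δ * x) = ℓ cs (cs.simple j * Δ) + ℓ cs x :=
      fact1 _ (G.mul_mem (hsimpleG j hj) hΔG)
    rw [mul_assoc, hΔx] at h2
    omega
  -- Bruhat bound
  have hble : ∀ u ∈ G, ble cs u⁻¹ Δ⁻¹ := by
    intro u huG
    generalize hn : ℓ cs u = n
    induction' n using Nat.strong_induction_on with n ihn generalizing u
    by_cases hu1 : u = 1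
    · subst hu1
      rw [inv_one]
      exact one_ble cs Δ⁻¹
    obtain ⟨l, hlT, hlred, hlprod⟩ := closure_reduced_word cs T huG
    have hlne : l ≠ [] := by
      intro h
      apply hu1
      rw [← hlprod, h, cs.wordProd_nil]
    obtain ⟨j, l₁, rfl⟩ := List.exists_cons_of_ne_nil hlne
    set u₁ := cs.wordProd l₁ with hu₁
    have hjT : j ∈ T := hlT j (List.mem_cons_self (a := j) (l := l₁))
    have hu₁G : u₁ ∈ G :=
      wordProd_mem_closure cs T l₁ (fun i hi => hlT i (List.mem_cons_of_mem _ hi))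
    have hredl₁ : cs.IsReduced l₁ := CoxeterSystem.IsReduced.drop hlred 1
    have hul : u = cs.simple j * u₁ := by rw [← hlprod, cs.wordProd_cons]
    have hlu : ℓ cs u = l₁.length + 1 := by
      rw [← hlprod, hlred]
      rfl
    have hlu₁ : ℓ cs u₁ = l₁.length := hredl₁
    have ihu₁ : ble cs u₁⁻¹ Δ⁻¹ := ihn (ℓ cs u₁) (by omega) u₁ hu₁G rfl
    obtain ⟨_, _, p3⟩ := bigZ cs (ℓ cs Δ⁻¹)
    have hinveq : ∀ y : W, ℓ cs (y⁻¹ * cs.simple j) = ℓ cs (cs.simple j * y) := by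
      intro y
      rw [← cs.length_inv, mul_inv_rev, inv_inv, cs.inv_simple]
    have hdes : ℓ cs (Δ⁻¹ * cs.simple j) < ℓ cs Δ⁻¹ := by
      rw [hinveq, cs.length_inv]
      have := hTΔ j hjT
      omega
    have hasc : ℓ cs u₁⁻¹ < ℓ cs (u₁⁻¹ * cs.simple j) := by
      rw [hinveq, cs.length_inv, ← hul]
      omega
    have hres := p3 Δ⁻¹ le_rfl u₁⁻¹ j hdes hasc ihu₁
    have huinv : u⁻¹ = u₁⁻¹ * cs.simple j := by
      rw [hul, mul_inv_rev, cs.inv_simple]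
    rw [huinv]
    exact hres
  have hlenbound : ∀ u ∈ G, ℓ cs u ≤ ℓ cs Δ := by
    intro u huG
    have h1 := ble_length cs (hble u huG)
    rw [cs.length_inv, cs.length_inv] at h1
    exact h1
  -- finiteness
  obtain ⟨ω₀, hω₀red, hω₀⟩ := cs.exists_reduced_word' Δ⁻¹
  have hfin : (G : Set W).Finite := by
    apply Set.Finite.subset (Set.Finite.image (fun ψ => (cs.wordProd ψ)⁻¹)
      (List.finite_toSet ω₀.sublists))
    intro u huG
    obtain ⟨ψ, hsub, _, hψ⟩ :=
      ble_subword cs (ℓ cs Δ⁻¹) Δ⁻¹ le_rfl u⁻¹ (hble u huG) ω₀ hω₀red hω₀.symm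
    refine ⟨ψ, ?_, ?_⟩
    · exact List.mem_sublists.mpr hsub
    · show (cs.wordProd ψ)⁻¹ = u
      rw [hψ, inv_inv]
  refine ⟨hfin, Δ, hΔG, hlenbound, ?_⟩
  have hΔw : Δ⁻¹ * w = x := by rw [← hΔx, inv_mul_cancel_left]
  rw [hΔw]
  exact hlw

end CoxStmt5


theorem parabolic_of_left_descents_finite_and_longest_le {B : Type*} {W : Type*}
    [Group W] {M : CoxeterMatrix B} (cs : CoxeterSystem M W)
    (w : W) (T : Set B) (hT : ∀ i ∈ T, cs.IsLeftDescent w i) :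
    (Subgroup.closure (cs.simple '' T) : Set W).Finite ∧
    ∃ Δ ∈ Subgroup.closure (cs.simple '' T),
      (∀ u ∈ Subgroup.closure (cs.simple '' T), cs.length u ≤ cs.length Δ) ∧
      cs.lePre Δ w := by
  obtain ⟨hfin, Δ, hΔG, hbound, hpre⟩ := CoxStmt5.main cs w T hT
  exact ⟨hfin, Δ, hΔG, hbound, hpre⟩
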